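/- Let α > 1, let ν be a measure on a measurable space S, let f : S → ℝ be measurable, and let λ ∈ ℝ be such that q(t) := [(α−1)(f(t) − λ)]_+^{1/(α−1)} satisfies ∫_S q dν = 1 and ∫_S q^α dν < ∞. Then for every probability density p with respect to ν with ∫_S p^α dν < ∞ (so that ∫_S p f dν is well-defined in [−∞, ∞)), one has ∫_S p f dν − Ω_α(p) ≤ (α−1)·Ω_α(q) + λ + 1/(α−1), with equality if and only if p = q ν-almost everywhere. In particular the α-entmax density q is the unique maximizer of p ↦ ∫_S p f dν − Ω_α(p) over probability densities. -/

import Mathlib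

open Filter Real MeasureTheory

lemma phi_pos {α : ℝ} (hα : 1 < α) {c x : ℝ} (hc : 0 < c) (hx : 0 ≤ x) (hne : x ≠ c) :
    α * c ^ (α - 1) * x - x ^ α < (α - 1) * c ^ α := by
  have hα1 : 0 < α - 1 := sub_pos.2 hα
  set φ : ℝ → ℝ := fun y => y ^ α - α * c ^ (α - 1) * y with hφ
  have hcont : Continuous φ := by
    apply Continuous.sub
    · exact continuous_id.rpow_const fun y => Or.inr (by positivity)
    · exact (continuous_const.mul continuous_id)
  have hderiv : ∀ y : ℝ, HasDerivAt φ (α * y ^ (α - 1) - α * c ^ (α - 1)) y := by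
    intro y
    have h1 : HasDerivAt (fun y : ℝ => y ^ α) (α * y ^ (α - 1)) y :=
      Real.hasDerivAt_rpow_const (Or.inr hα.le)
    have h2 : HasDerivAt (fun y : ℝ => α * c ^ (α - 1) * y) (α * c ^ (α - 1)) y := by
      simpa using (hasDerivAt_id y).const_mul (α * c ^ (α - 1))
    exact h1.sub h2
  have hanti : StrictAntiOn φ (Set.Icc 0 c) := by
    apply strictAntiOn_of_deriv_neg (convex_Icc 0 c) hcont.continuousOn
    intro y hy
    rw [interior_Icc] at hy
    rw [(hderiv y).deriv]
    have : y ^ (α - 1) < c ^ (α - 1) := Real.rpow_lt_rpow hy.1.le hy.2 hα1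
    have hα0 : 0 < α := lt_trans one_pos hα
    nlinarith
  have hmono : StrictMonoOn φ (Set.Ici c) := by
    apply strictMonoOn_of_deriv_pos (convex_Ici c) hcont.continuousOn
    intro y hy
    rw [interior_Ici] at hy
    rw [(hderiv y).deriv]
    have : c ^ (α - 1) < y ^ (α - 1) := Real.rpow_lt_rpow hc.le hy hα1
    have hα0 : 0 < α := lt_trans one_pos hα
    nlinarith
  have hcc : c ^ (α - 1) * c = c ^ α := by
    rw [show c ^ α = c ^ (α - 1 + 1) by ring_nf, Real.rpow_add hc, Real.rpow_one]
  have hphic : φ c < φ x := by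
    rcases lt_or_gt_of_ne hne with h | h
    · exact hanti ⟨hx, h.le⟩ ⟨hc.le, le_rfl⟩ h
    · exact hmono (Set.mem_Ici.2 le_rfl) (Set.mem_Ici.2 (le_of_lt (lt_of_le_of_lt le_rfl h))) h
  have hφc : φ c = (1 - α) * c ^ α := by
    simp only [hφ]; nlinarith [hcc]
  simp only [hφ] at hphic
  nlinarith

lemma key_lt {α : ℝ} (hα : 1 < α) (a x : ℝ) (hx : 0 ≤ x)
    (hne : x ≠ max ((α - 1) * a) 0 ^ (1 / (α - 1))) :
    x * a - x ^ α / (α * (α - 1)) <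
      (max ((α - 1) * a) 0 ^ (1 / (α - 1))) * a -
        (max ((α - 1) * a) 0 ^ (1 / (α - 1))) ^ α / (α * (α - 1)) := by
  have hα1 : 0 < α - 1 := sub_pos.2 hα
  have hα0 : 0 < α := lt_trans one_pos hα
  have hK : 0 < α * (α - 1) := mul_pos hα0 hα1
  rcases le_or_gt a 0 with ha | ha
  · have hmax : max ((α - 1) * a) 0 = 0 :=
      max_eq_right (mul_nonpos_of_nonneg_of_nonpos hα1.le ha)
    rw [hmax] at hne ⊢
    rw [Real.zero_rpow (by positivity)] at hne ⊢
    have hx0 : 0 < x := lt_of_le_of_ne hx (Ne.symm hne)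
    have h1 : 0 < x ^ α := Real.rpow_pos_of_pos hx0 α
    have h2 : x * a ≤ 0 := mul_nonpos_of_nonneg_of_nonpos hx ha
    rw [Real.zero_rpow (ne_of_gt hα0)]
    have h3 : 0 < x ^ α / (α * (α - 1)) := div_pos h1 hK
    simp only [zero_mul, zero_div, sub_zero]
    linarith
  · have hM : 0 < (α - 1) * a := mul_pos hα1 ha
    have hmax : max ((α - 1) * a) 0 = (α - 1) * a := max_eq_left hM.le
    rw [hmax] at hne ⊢
    set c : ℝ := ((α - 1) * a) ^ (1 / (α - 1)) with hcdef
    have hc : 0 < c := Real.rpow_pos_of_pos hM _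
    have hca : c ^ (α - 1) = (α - 1) * a := by
      rw [hcdef, ← Real.rpow_mul hM.le, one_div_mul_cancel (ne_of_gt hα1), Real.rpow_one]
    have hcc : c ^ (α - 1) * c = c ^ α := by
      rw [show c ^ α = c ^ (α - 1 + 1) by ring_nf, Real.rpow_add hc, Real.rpow_one]
    have key := phi_pos hα hc hx hne
    have h2 : x * a = α * c ^ (α - 1) * x / (α * (α - 1)) := by
      rw [hca]; field_simp
    have h3 : c * a = α * c ^ α / (α * (α - 1)) := by
      rw [← hcc, hca]; field_simp
    rw [h2, h3, div_sub_div_same, div_sub_div_same, div_lt_div_iff_of_pos_right hK]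
    linarith
lemma key_le {α : ℝ} (hα : 1 < α) (a x : ℝ) (hx : 0 ≤ x) :
    x * a - x ^ α / (α * (α - 1)) ≤
      (max ((α - 1) * a) 0 ^ (1 / (α - 1))) * a -
        (max ((α - 1) * a) 0 ^ (1 / (α - 1))) ^ α / (α * (α - 1)) := by
  rcases eq_or_ne x (max ((α - 1) * a) 0 ^ (1 / (α - 1))) with h | h
  · rw [h]
  · exact (key_lt hα a x hx h).le

/-- The α-entmax density `q(t) = [(α−1)(f(t) − λ)]₊^(1/(α−1))` is the unique maximizer of
`p ↦ ∫ p f − Ω_α(p)` over probability densities, where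
`Ω_α(p) = (1/(α(α−1)))(∫ p^α − 1)`; the maximum value is
`(α−1) Ω_α(q) + λ + 1/(α−1)`, with equality iff `p = q` ν-a.e. -/
theorem stmt_3 {S : Type*} [MeasurableSpace S] (ν : Measure S)
    (α : ℝ) (hα : 1 < α) (f : S → ℝ) (hf : Measurable f) (lam : ℝ)
    (q : S → ℝ) (hq : ∀ t, q t = max ((α - 1) * (f t - lam)) 0 ^ (1 / (α - 1)))
    (hq_int : Integrable q ν) (hq_one : ∫ t, q t ∂ν = 1)
    (hqα : Integrable (fun t => q t ^ α) ν)
    (p : S → ℝ) (hp_meas : Measurable p) (hp_nonneg : ∀ t, 0 ≤ p t)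
    (hp_int : Integrable p ν) (hp_one : ∫ t, p t ∂ν = 1)
    (hpα : Integrable (fun t => p t ^ α) ν)
    (hpf : Integrable (fun t => p t * f t) ν) :
    (∫ t, p t * f t ∂ν) - (1 / (α * (α - 1))) * ((∫ t, p t ^ α ∂ν) - 1) ≤
        (α - 1) * ((1 / (α * (α - 1))) * ((∫ t, q t ^ α ∂ν) - 1)) + lam + 1 / (α - 1) ∧
      ((∫ t, p t * f t ∂ν) - (1 / (α * (α - 1))) * ((∫ t, p t ^ α ∂ν) - 1) =
          (α - 1) * ((1 / (α * (α - 1))) * ((∫ t, q t ^ α ∂ν) - 1)) + lam + 1 / (α - 1) ↔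
        p =ᵐ[ν] q) := by
  have hα1 : 0 < α - 1 := sub_pos.2 hα
  have hα0 : 0 < α := lt_trans one_pos hα
  have hK : 0 < α * (α - 1) := mul_pos hα0 hα1
  -- pointwise identity for q
  have qid : ∀ t, q t * (f t - lam) = q t ^ α / (α - 1) := by
    intro t
    rcases le_or_gt (f t) lam with h | h
    · have hmax : max ((α - 1) * (f t - lam)) 0 = 0 :=
        max_eq_right (mul_nonpos_of_nonneg_of_nonpos hα1.le (by linarith))
      have hq0 : q t = 0 := by rw [hq t, hmax, Real.zero_rpow (by positivity)]
      rw [hq0, Real.zero_rpow (ne_of_gt hα0)]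
      simp
    · have hM : 0 < (α - 1) * (f t - lam) := mul_pos hα1 (by linarith)
      set M : ℝ := (α - 1) * (f t - lam) with hMdef
      have hqt : q t = M ^ (1 / (α - 1)) := by rw [hq t, max_eq_left hM.le]
      have hflam : f t - lam = M / (α - 1) := by rw [hMdef]; field_simp
      rw [hqt, hflam, ← Real.rpow_mul hM.le]
      rw [show M ^ (1 / (α - 1)) * (M / (α - 1)) = M ^ (1 / (α - 1)) * M / (α - 1) by ring]
      rw [show M ^ (1 / (α - 1)) * M = M ^ (1 / (α - 1) + 1) by
        rw [Real.rpow_add hM, Real.rpow_one]]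
      rw [show 1 / (α - 1) + 1 = 1 / (α - 1) * α by field_simp; ring]
  have hid : ∀ y : ℝ, y / (α - 1) - y / (α * (α - 1)) = y / α := by
    intro y; field_simp
  set gp : S → ℝ := fun t => p t * f t - lam * p t - p t ^ α / (α * (α - 1)) with hgpdef
  set gq : S → ℝ := fun t => q t ^ α / α with hgqdef
  have hgp_int : Integrable gp ν :=
    (hpf.sub (hp_int.const_mul lam)).sub (hpα.div_const _)
  have hgq_int : Integrable gq ν := hqα.div_const α
  have hpw : ∀ t, gp t ≤ gq t := by
    intro t
    have h1 := key_le hα (f t - lam) (p t) (hp_nonneg t)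
    rw [← hq t] at h1
    have h2 := qid t
    have h3 : p t * (f t - lam) = p t * f t - lam * p t := by ring
    have h4 := hid (q t ^ α)
    simp only [hgpdef, hgqdef]
    linarith
  have hpw_lt : ∀ t, p t ≠ q t → gp t < gq t := by
    intro t hne
    have h1 := key_lt hα (f t - lam) (p t) (hp_nonneg t) (by rw [← hq t]; exact hne)
    rw [← hq t] at h1
    have h2 := qid t
    have h3 : p t * (f t - lam) = p t * f t - lam * p t := by ring
    have h4 := hid (q t ^ α)
    simp only [hgpdef, hgqdef]
    linarith
  have hgp_val : ∫ t, gp t ∂ν =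
      (∫ t, p t * f t ∂ν) - lam - (∫ t, p t ^ α ∂ν) / (α * (α - 1)) := by
    simp only [hgpdef]
    have hint2 : Integrable (fun t => lam * p t) ν := hp_int.const_mul lam
    have hint1 : Integrable (fun t => p t * f t - lam * p t) ν := hpf.sub hint2
    rw [integral_sub hint1 (hpα.div_const _), integral_sub hpf hint2,
      integral_const_mul, integral_div, hp_one, mul_one]
  have hgq_val : ∫ t, gq t ∂ν = (∫ t, q t ^ α ∂ν) / α := by
    simp only [hgqdef]; rw [integral_div]
  have hL : (∫ t, p t * f t ∂ν) - (1 / (α * (α - 1))) * ((∫ t, p t ^ α ∂ν) - 1) =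
      (∫ t, gp t ∂ν) + lam + 1 / (α * (α - 1)) := by
    rw [hgp_val]; ring
  have hR : (α - 1) * ((1 / (α * (α - 1))) * ((∫ t, q t ^ α ∂ν) - 1)) + lam + 1 / (α - 1) =
      (∫ t, gq t ∂ν) + lam + 1 / (α * (α - 1)) := by
    rw [hgq_val]; field_simp; ring
  have hle : (∫ t, gp t ∂ν) ≤ ∫ t, gq t ∂ν :=
    integral_mono hgp_int hgq_int hpw
  constructor
  · rw [hL, hR]; linarith
  · constructor
    · intro heq
      rw [hL, hR] at heq
      have heq' : (∫ t, gp t ∂ν) = ∫ t, gq t ∂ν := by linarith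
      have h0 : ∫ t, (gq t - gp t) ∂ν = 0 := by
        rw [integral_sub hgq_int hgp_int, heq', sub_self]
      have hae : (fun t => gq t - gp t) =ᵐ[ν] 0 :=
        (integral_eq_zero_iff_of_nonneg (fun t => sub_nonneg.2 (hpw t))
          (hgq_int.sub hgp_int)).1 h0
      filter_upwards [hae] with t ht
      by_contra hne
      have := hpw_lt t hne
      simp only [Pi.zero_apply] at ht
      linarith
    · intro hpq
      have hgpq : gp =ᵐ[ν] gq := by
        filter_upwards [hpq] with t ht
        simp only [hgpdef, hgqdef]
        have h2 := qid t
        have h4 := hid (q t ^ α)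
        rw [ht]
        linarith
      rw [hL, hR, integral_congr_ae hgpq]
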